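/- (Generalized variational principle of Herglotz, differentiable case.) Let a < b, z_a ∈ ℝ, and let L : ℝ × ℝ × ℝ × ℝ → ℝ be of class C². Let x : ℝ → ℝ be of class C² and z : ℝ → ℝ be of class C¹ with z'(t) = L(t, x(t), x'(t), z(t)) for all t ∈ [a,b] and z(a) = z_a. Assume that for every C² function η : ℝ → ℝ with η(a) = η(b) = 0 there exists a function Z : ℝ × ℝ → ℝ of class C² such that: Z(0,t) = z(t) for all t ∈ [a,b]; ∂Z/∂t(ε,t) = L(t, x(t)+ε·η(t), x'(t)+ε·η'(t), Z(ε,t)) for all ε ∈ ℝ and t ∈ [a,b]; Z(ε,a) = z_a for all ε ∈ ℝ; and ∂Z/∂ε(0,b) = 0. Then for all t ∈ [a,b]: (d/dt)[∂₃L(t, x(t), x'(t), z(t))] = ∂₂L(t, x(t), x'(t), z(t)) + ∂₄L(t, x(t), x'(t), z(t))·∂₃L(t, x(t), x'(t), z(t)). -/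

import Mathlib

open intervalIntegral Metric Set

section Aux
lemma curve_hasDerivAt {f g h k : ℝ → ℝ} {f' g' h' k' : ℝ} {t : ℝ}
    (hf : HasDerivAt f f' t) (hg : HasDerivAt g g' t) (hh : HasDerivAt h h' t)
    (hk : HasDerivAt k k' t) :
    HasDerivAt (fun s => ((f s, g s, h s, k s) : ℝ × ℝ × ℝ × ℝ)) (f', g', h', k') t :=
  hf.prodMk (hg.prodMk (hh.prodMk hk))

variable (F : ℝ × ℝ × ℝ × ℝ → ℝ)

lemma slice2 {t y v w : ℝ} (hF : DifferentiableAt ℝ F (t, y, v, w)) :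
    HasDerivAt (fun y' => F (t, y', v, w)) (fderiv ℝ F (t, y, v, w) (0, 1, 0, 0)) y := by
  have h := hF.hasFDerivAt.comp_hasDerivAt y
    (curve_hasDerivAt (hasDerivAt_const y t) (hasDerivAt_id y)
      (hasDerivAt_const y v) (hasDerivAt_const y w))
  simpa [Function.comp_def] using h

lemma slice3 {t y v w : ℝ} (hF : DifferentiableAt ℝ F (t, y, v, w)) :
    HasDerivAt (fun v' => F (t, y, v', w)) (fderiv ℝ F (t, y, v, w) (0, 0, 1, 0)) v := by
  have h := hF.hasFDerivAt.comp_hasDerivAt v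
    (curve_hasDerivAt (hasDerivAt_const v t) (hasDerivAt_const v y)
      (hasDerivAt_id v) (hasDerivAt_const v w))
  simpa [Function.comp_def] using h

lemma slice4 {t y v w : ℝ} (hF : DifferentiableAt ℝ F (t, y, v, w)) :
    HasDerivAt (fun w' => F (t, y, v, w')) (fderiv ℝ F (t, y, v, w) (0, 0, 0, 1)) w := by
  have h := hF.hasFDerivAt.comp_hasDerivAt w
    (curve_hasDerivAt (hasDerivAt_const w t) (hasDerivAt_const w y)
      (hasDerivAt_const w v) (hasDerivAt_id w))
  simpa [Function.comp_def] using h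

lemma vec_decomp (u v w : ℝ) :
    ((0, u, v, w) : ℝ × ℝ × ℝ × ℝ)
      = u • (0, 1, 0, 0) + v • (0, 0, 1, 0) + w • (0, 0, 0, 1) := by
  simp [Prod.ext_iff]
end Aux

theorem stmt_11 (a b z_a : ℝ) (hab : a < b)
    (L : ℝ → ℝ → ℝ → ℝ → ℝ)
    (hL : ContDiff ℝ 2 (fun p : ℝ × ℝ × ℝ × ℝ => L p.1 p.2.1 p.2.2.1 p.2.2.2))
    (x z : ℝ → ℝ) (hx : ContDiff ℝ 2 x) (hz : ContDiff ℝ 1 z)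
    (hzeq : ∀ t ∈ Set.Icc a b, deriv z t = L t (x t) (deriv x t) (z t))
    (hza : z a = z_a)
    (hvar : ∀ η : ℝ → ℝ, ContDiff ℝ 2 η → η a = 0 → η b = 0 →
      ∃ Z : ℝ → ℝ → ℝ,
        ContDiff ℝ 2 (fun p : ℝ × ℝ => Z p.1 p.2) ∧
        (∀ t ∈ Set.Icc a b, Z 0 t = z t) ∧
        (∀ ε : ℝ, ∀ t ∈ Set.Icc a b,
          deriv (fun s => Z ε s) t
            = L t (x t + ε * η t) (deriv x t + ε * deriv η t) (Z ε t)) ∧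
        (∀ ε : ℝ, Z ε a = z_a) ∧
        deriv (fun ε => Z ε b) 0 = 0) :
    ∀ t ∈ Set.Icc a b,
      deriv (fun s => deriv (fun v => L s (x s) v (z s)) (deriv x s)) t
        = deriv (fun y => L t y (deriv x t) (z t)) (x t)
          + deriv (fun w => L t (x t) (deriv x t) w) (z t)
            * deriv (fun v => L t (x t) v (z t)) (deriv x t) := by
  set Lp : ℝ × ℝ × ℝ × ℝ → ℝ := fun p => L p.1 p.2.1 p.2.2.1 p.2.2.2 with hLpdef
  have hLd : Differentiable ℝ Lp := hL.differentiable (by norm_num)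
  have hx' : ContDiff ℝ 1 (deriv x) :=
    (contDiff_succ_iff_deriv.mp (show ContDiff ℝ (1+1) x from hx)).2.2
  have hxd : Differentiable ℝ x := hx.differentiable (by norm_num)
  set c : ℝ → ℝ × ℝ × ℝ × ℝ := fun t => (t, x t, deriv x t, z t) with hcdef
  have hcC1 : ContDiff ℝ 1 c :=
    contDiff_id.prodMk ((hx.of_le (by norm_num)).prodMk (hx'.prodMk hz))
  set P2 : ℝ → ℝ := fun t => fderiv ℝ Lp (c t) (0, 1, 0, 0) with hP2def
  set P3 : ℝ → ℝ := fun t => fderiv ℝ Lp (c t) (0, 0, 1, 0) with hP3def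
  set P4 : ℝ → ℝ := fun t => fderiv ℝ Lp (c t) (0, 0, 0, 1) with hP4def
  have hfC1 : ContDiff ℝ 1 (fun p => fderiv ℝ Lp p) := hL.fderiv_right (by norm_num)
  have happ : ∀ e : ℝ × ℝ × ℝ × ℝ, ContDiff ℝ 1 (fun t => fderiv ℝ Lp (c t) e) := by
    intro e
    exact ((ContinuousLinearMap.apply ℝ ℝ e).contDiff.comp hfC1).comp hcC1
  have hP2c : Continuous P2 := (happ _).continuous
  have hP3C1 : ContDiff ℝ 1 P3 := happ _
  have hP3c : Continuous P3 := hP3C1.continuous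
  have hP4c : Continuous P4 := (happ _).continuous
  have hP3d : Differentiable ℝ P3 := hP3C1.differentiable (by norm_num)
  have hP3'c : Continuous (deriv P3) := (contDiff_one_iff_deriv.mp hP3C1).2
  -- slice identifications
  have hs2 : ∀ t : ℝ, deriv (fun y => L t y (deriv x t) (z t)) (x t) = P2 t := fun t =>
    (slice2 Lp (hLd _)).deriv
  have hs3 : ∀ t : ℝ, deriv (fun v => L t (x t) v (z t)) (deriv x t) = P3 t := fun t =>
    (slice3 Lp (hLd _)).deriv
  have hs4 : ∀ t : ℝ, deriv (fun w => L t (x t) (deriv x t) w) (z t) = P4 t := fun t =>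
    (slice4 Lp (hLd _)).deriv
  -- main reduction
  have main : ∀ t ∈ Set.Icc a b, deriv P3 t = P2 t + P4 t * P3 t := by
    set E : ℝ → ℝ := fun t => Real.exp (-(∫ s in a..t, P4 s)) with hEdef
    have hEpos : ∀ t, 0 < E t := fun t => Real.exp_pos _
    have hE' : ∀ t, HasDerivAt E (-P4 t * E t) t := by
      intro t
      have hI : HasDerivAt (fun u => ∫ s in a..u, P4 s) (P4 t) t :=
        (hP4c.integral_hasStrictDerivAt a t).hasDerivAt
      have h := (Real.hasDerivAt_exp (-(∫ s in a..t, P4 s))).comp t hI.neg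
      simpa [hEdef, mul_comm, Function.comp_def] using h
    have hEc : Continuous E :=
      Real.continuous_exp.comp (Continuous.neg (by
        exact intervalIntegral.continuous_primitive (fun u v => hP4c.intervalIntegrable u v) a))
    -- the integral identity from the variational hypothesis
    have hint : ∀ η : ℝ → ℝ, ContDiff ℝ 2 η → η a = 0 → η b = 0 →
        ∫ s in a..b, (P2 s + P4 s * P3 s - deriv P3 s) * E s * η s = 0 := by
      intro η hη2 hηa hηb
      obtain ⟨Z, hZC2, hZ0, hZode, hZa, hZb⟩ := hvar η hη2 hηa hηb
      set Z2 : ℝ × ℝ → ℝ := fun p => Z p.1 p.2 with hZ2def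
      have hZ2d : Differentiable ℝ Z2 := hZC2.differentiable (by norm_num)
      have hZf : ContDiff ℝ 1 (fun p => fderiv ℝ Z2 p) := hZC2.fderiv_right (by norm_num)
      set g : ℝ → ℝ := fun t => fderiv ℝ Z2 (0, t) (1, 0) with hgdef
      have hηc : Continuous η := hη2.continuous
      have hη' : Continuous (deriv η) :=
        ((contDiff_succ_iff_deriv.mp (show ContDiff ℝ (1+1) η from hη2)).2.2).continuous
      have hηd : Differentiable ℝ η := hη2.differentiable (by norm_num)
      have hgt : ∀ ε t : ℝ, HasDerivAt (fun ε' => Z ε' t) (fderiv ℝ Z2 (ε, t) (1, 0)) ε := by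
        intro ε t
        have h := (hZ2d (ε, t)).hasFDerivAt.comp_hasDerivAt ε
          ((hasDerivAt_id ε).prodMk (hasDerivAt_const ε t))
        simpa [Function.comp_def] using h
      have hts : ∀ ε t : ℝ, HasDerivAt (fun s => Z ε s) (fderiv ℝ Z2 (ε, t) (0, 1)) t := by
        intro ε t
        have h := (hZ2d (ε, t)).hasFDerivAt.comp_hasDerivAt t
          ((hasDerivAt_const t ε).prodMk (hasDerivAt_id t))
        simpa [Function.comp_def] using h
      have hga : g a = 0 := by
        have h0 : g a = deriv (fun ε' => Z ε' a) 0 := ((hgt 0 a).deriv).symm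
        have h1 : (fun ε' => Z ε' a) = fun _ => z_a := funext hZa
        rw [h0, h1, deriv_const]
      have hgb : g b = 0 := by
        have h0 : deriv (fun ε' => Z ε' b) 0 = g b := (hgt 0 b).deriv
        exact h0.symm.trans hZb
      have hmix : ∀ t : ℝ, HasDerivAt g (fderiv ℝ (fderiv ℝ Z2) (0, t) (0, 1) (1, 0)) t := by
        intro t
        have h1 : HasFDerivAt (fun p => fderiv ℝ Z2 p) (fderiv ℝ (fderiv ℝ Z2) (0, t)) (0, t) :=
          (hZf.differentiable (by norm_num) (0, t)).hasFDerivAt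
        have h2 := (((ContinuousLinearMap.apply ℝ ℝ ((1:ℝ), (0:ℝ))).hasFDerivAt.comp (((0:ℝ), t) : ℝ × ℝ) h1).comp_hasDerivAt t
          ((hasDerivAt_const t (0:ℝ)).prodMk (hasDerivAt_id t)))
        simpa [Function.comp_def] using h2
      have hsymm : ∀ t : ℝ, fderiv ℝ (fderiv ℝ Z2) (0, t) (0, 1) (1, 0)
          = fderiv ℝ (fderiv ℝ Z2) (0, t) (1, 0) (0, 1) :=
        fun t => (hZC2.contDiffAt.isSymmSndFDerivAt (by simp)).eq _ _
      have hg' : ∀ t ∈ Set.Icc a b,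
          HasDerivAt g (η t * P2 t + deriv η t * P3 t + g t * P4 t) t := by
        intro t ht
        have hweq : (fun ε => fderiv ℝ Z2 (ε, t) (0, 1))
            = fun ε => Lp (t, x t + ε * η t, deriv x t + ε * deriv η t, Z ε t) := by
          funext ε
          have h1 := (hts ε t).deriv
          rw [← h1]
          exact hZode ε t ht
        have hw1 : HasDerivAt (fun ε => fderiv ℝ Z2 (ε, t) (0, 1))
            (fderiv ℝ (fderiv ℝ Z2) (0, t) (1, 0) (0, 1)) 0 := by
          have h1 : HasFDerivAt (fun p => fderiv ℝ Z2 p) (fderiv ℝ (fderiv ℝ Z2) (0, t)) (0, t) :=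
            (hZf.differentiable (by norm_num) (0, t)).hasFDerivAt
          have h2 := (((ContinuousLinearMap.apply ℝ ℝ ((0:ℝ), (1:ℝ))).hasFDerivAt.comp (((0:ℝ), t) : ℝ × ℝ) h1).comp_hasDerivAt 0
            ((hasDerivAt_id (0:ℝ)).prodMk (hasDerivAt_const (0:ℝ) t)))
          simpa [Function.comp_def] using h2
        have hc2 : HasDerivAt (fun ε : ℝ => x t + ε * η t) (η t) 0 := by
          simpa using ((hasDerivAt_id (0:ℝ)).mul_const (η t)).const_add (x t)
        have hc3 : HasDerivAt (fun ε : ℝ => deriv x t + ε * deriv η t) (deriv η t) 0 := by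
          simpa using ((hasDerivAt_id (0:ℝ)).mul_const (deriv η t)).const_add (deriv x t)
        have hcurve : HasDerivAt
            (fun ε => ((t, x t + ε * η t, deriv x t + ε * deriv η t, Z ε t) : ℝ×ℝ×ℝ×ℝ))
            ((0, η t, deriv η t, g t) : ℝ×ℝ×ℝ×ℝ) 0 :=
          curve_hasDerivAt (hasDerivAt_const 0 t) hc2 hc3 (hgt 0 t)
        have hpt : ((t, x t + (0:ℝ) * η t, deriv x t + (0:ℝ) * deriv η t, Z 0 t) : ℝ×ℝ×ℝ×ℝ)
            = c t := by
          simp [hcdef, hZ0 t ht]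
        have hfd : HasFDerivAt Lp (fderiv ℝ Lp (c t))
            ((t, x t + (0:ℝ) * η t, deriv x t + (0:ℝ) * deriv η t, Z 0 t) : ℝ×ℝ×ℝ×ℝ) := by
          rw [hpt]; exact (hLd _).hasFDerivAt
        have hw2 : HasDerivAt
            (fun ε => Lp (t, x t + ε * η t, deriv x t + ε * deriv η t, Z ε t))
            (fderiv ℝ Lp (c t) ((0, η t, deriv η t, g t) : ℝ×ℝ×ℝ×ℝ)) 0 :=
          by have := hfd.comp_hasDerivAt 0 hcurve; exact this
        have hval : fderiv ℝ (fderiv ℝ Z2) (0, t) (1, 0) (0, 1)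
            = fderiv ℝ Lp (c t) ((0, η t, deriv η t, g t) : ℝ×ℝ×ℝ×ℝ) := by
          have h := hw1
          rw [hweq] at h
          exact h.unique hw2
        have hlin : fderiv ℝ Lp (c t) ((0, η t, deriv η t, g t) : ℝ×ℝ×ℝ×ℝ)
            = η t * P2 t + deriv η t * P3 t + g t * P4 t := by
          rw [vec_decomp]
          simp only [map_add, map_smul, smul_eq_mul]
          rfl
        have h := hmix t
        rw [hsymm t, hval, hlin] at h
        exact h
      have hcont1 : Continuous fun s => (η s * P2 s + deriv η s * P3 s) * E s :=
        ((hηc.mul hP2c).add (hη'.mul hP3c)).mul hEc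
      have hG : ∀ s ∈ Set.uIcc a b,
          HasDerivAt (fun u => g u * E u) ((η s * P2 s + deriv η s * P3 s) * E s) s := by
        intro s hs
        rw [Set.uIcc_of_le hab.le] at hs
        have h := (hg' s hs).mul (hE' s)
        refine h.congr_deriv ?_
        ring
      have hI1 : ∫ s in a..b, (η s * P2 s + deriv η s * P3 s) * E s = 0 := by
        rw [integral_eq_sub_of_hasDerivAt hG (hcont1.intervalIntegrable a b)]
        simp [hga, hgb]
      have hu : ∀ s ∈ Set.uIcc a b,
          HasDerivAt (fun u => P3 u * E u) ((deriv P3 s - P4 s * P3 s) * E s) s := by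
        intro s _
        have h := ((hP3d s).hasDerivAt).mul (hE' s)
        refine h.congr_deriv ?_
        ring
      have hv : ∀ s ∈ Set.uIcc a b, HasDerivAt η (deriv η s) s := fun s _ => (hηd s).hasDerivAt
      have hcont2 : Continuous fun s => (deriv P3 s - P4 s * P3 s) * E s :=
        (hP3'c.sub (hP4c.mul hP3c)).mul hEc
      have hI2 := integral_mul_deriv_eq_deriv_mul hu hv
        (hcont2.intervalIntegrable a b) (hη'.intervalIntegrable a b)
      rw [hηa, hηb, mul_zero, mul_zero, sub_zero, zero_sub] at hI2
      have e1 : ∀ s : ℝ, (P2 s + P4 s * P3 s - deriv P3 s) * E s * η s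
          = (η s * P2 s + deriv η s * P3 s) * E s
            - ((P3 s * E s) * deriv η s + ((deriv P3 s - P4 s * P3 s) * E s) * η s) := by
        intro s; ring
      have hcont3 : Continuous fun s => (P3 s * E s) * deriv η s :=
        ((hP3c.mul hEc)).mul hη'
      have hcont4 : Continuous fun s => ((deriv P3 s - P4 s * P3 s) * E s) * η s :=
        hcont2.mul hηc
      simp only [e1]
      rw [intervalIntegral.integral_sub (hcont1.intervalIntegrable a b)
        ((show Continuous fun s => (P3 s * E s) * deriv η s + ((deriv P3 s - P4 s * P3 s) * E s) * η s from hcont3.add hcont4).intervalIntegrable a b),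
        intervalIntegral.integral_add (hcont3.intervalIntegrable a b)
          (hcont4.intervalIntegrable a b), hI1, hI2]
      ring
    -- fundamental lemma of the calculus of variations
    have hzero : ∀ t ∈ Set.Ioo a b, P2 t + P4 t * P3 t - deriv P3 t = 0 := by
      intro t₀ ht₀
      set f : ℝ → ℝ := fun s => (P2 s + P4 s * P3 s - deriv P3 s) * E s with hfdef
      have hfc : Continuous f := ((hP2c.add (hP4c.mul hP3c)).sub hP3'c).mul hEc
      suffices hf0 : f t₀ = 0 by
        rcases mul_eq_zero.mp hf0 with h | h
        · exact h
        · exact absurd h (hEpos t₀).ne'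
      by_contra hne
      obtain ⟨δ1, hδ1pos, hδ1⟩ := Metric.continuousAt_iff.mp hfc.continuousAt
        |f t₀| (abs_pos.mpr hne)
      set δ : ℝ := min δ1 (min (t₀ - a) (b - t₀)) with hδdef
      have hδpos : 0 < δ :=
        lt_min hδ1pos (lt_min (by linarith [ht₀.1]) (by linarith [ht₀.2]))
      have hta : a ≤ t₀ - δ := by
        have : δ ≤ t₀ - a := le_trans (min_le_right _ _) (min_le_left _ _)
        linarith
      have htb : t₀ + δ ≤ b := by
        have : δ ≤ b - t₀ := le_trans (min_le_right _ _) (min_le_right _ _)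
        linarith
      have hsign : ∀ s : ℝ, dist s t₀ < δ → 0 < f t₀ * f s := by
        intro s hs
        have h1 := hδ1 (lt_of_lt_of_le hs (min_le_left _ _))
        rw [Real.dist_eq] at h1
        rcases (Ne.lt_or_gt hne) with h | h
        · have h2 := abs_lt.mp h1
          rw [abs_of_neg h] at h2
          nlinarith
        · have h2 := abs_lt.mp h1
          rw [abs_of_pos h] at h2
          nlinarith
      set φ : ContDiffBump t₀ := ⟨δ/2, δ, by positivity, by linarith⟩ with hφdef
      set η : ℝ → ℝ := fun s => φ s with hηdef
      have hηC : ContDiff ℝ 2 η := φ.contDiff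
      have hηzero : ∀ s : ℝ, δ ≤ dist s t₀ → η s = 0 := fun s hs => φ.zero_of_le_dist hs
      have hηa : η a = 0 := by
        apply hηzero
        rw [Real.dist_eq, abs_of_nonpos (by linarith)]
        linarith
      have hηb : η b = 0 := by
        apply hηzero
        rw [Real.dist_eq, abs_of_nonneg (by linarith)]
        linarith
      have h0 : ∫ s in a..b, f s * η s = 0 := hint η hηC hηa hηb
      have hcontfη : Continuous fun s => f s * η s := hfc.mul hηC.continuous
      have hz1 : ∫ s in a..(t₀ - δ), f s * η s = 0 := by
        have heq : Set.EqOn (fun s => f s * η s) 0 (Set.uIcc a (t₀ - δ)) := by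
          intro s hs
          rw [Set.uIcc_of_le (by linarith)] at hs
          have hzs : η s = 0 := by
            apply hηzero
            rw [Real.dist_eq, abs_of_nonpos (by linarith [hs.2])]
            linarith [hs.2]
          simp [hzs]
        rw [intervalIntegral.integral_congr heq]
        simp
      have hz2 : ∫ s in (t₀ + δ)..b, f s * η s = 0 := by
        have heq : Set.EqOn (fun s => f s * η s) 0 (Set.uIcc (t₀ + δ) b) := by
          intro s hs
          rw [Set.uIcc_of_le (by linarith)] at hs
          have hzs : η s = 0 := by
            apply hηzero
            rw [Real.dist_eq, abs_of_nonneg (by linarith [hs.1])]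
            linarith [hs.1]
          simp [hzs]
        rw [intervalIntegral.integral_congr heq]
        simp
      have hadj1 := intervalIntegral.integral_add_adjacent_intervals (μ := MeasureTheory.volume)
        (hcontfη.intervalIntegrable a (t₀ - δ)) (hcontfη.intervalIntegrable (t₀ - δ) b)
      have hadj2 := intervalIntegral.integral_add_adjacent_intervals (μ := MeasureTheory.volume)
        (hcontfη.intervalIntegrable (t₀ - δ) (t₀ + δ)) (hcontfη.intervalIntegrable (t₀ + δ) b)
      have hsplit : ∫ s in (t₀ - δ)..(t₀ + δ), f s * η s = 0 := by
        linarith [hadj1, hadj2, hz1, hz2, h0]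
      have hmem : ∀ s ∈ Set.Ioo (t₀ - δ) (t₀ + δ), dist s t₀ < δ := by
        intro s hs
        rw [Real.dist_eq, abs_lt]
        exact ⟨by linarith [hs.1], by linarith [hs.2]⟩
      rcases (Ne.lt_or_gt hne) with hneg | hpos
      · have hp : 0 < ∫ s in (t₀ - δ)..(t₀ + δ), -(f s * η s) := by
          apply intervalIntegral_pos_of_pos_on
            ((hcontfη.neg).intervalIntegrable (t₀ - δ) (t₀ + δ) :
              IntervalIntegrable _ MeasureTheory.volume _ _)
          · intro s hs
            have h1 := hsign s (hmem s hs)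
            have h2 : 0 < η s := φ.pos_of_mem_ball (by rw [Metric.mem_ball]; exact hmem s hs)
            have hfs : f s < 0 := by nlinarith
            show 0 < -(f s * η s)
            nlinarith
          · linarith
        rw [intervalIntegral.integral_neg, hsplit] at hp
        simp at hp
      · have hp : 0 < ∫ s in (t₀ - δ)..(t₀ + δ), f s * η s := by
          apply intervalIntegral_pos_of_pos_on
            (hcontfη.intervalIntegrable (t₀ - δ) (t₀ + δ) :
              IntervalIntegrable _ MeasureTheory.volume _ _)
          · intro s hs
            have h1 := hsign s (hmem s hs)
            have h2 : 0 < η s := φ.pos_of_mem_ball (by rw [Metric.mem_ball]; exact hmem s hs)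
            have hfs : 0 < f s := by nlinarith
            nlinarith
          · linarith
        rw [hsplit] at hp
        simp at hp
    have h1 : Set.EqOn (deriv P3) (fun t => P2 t + P4 t * P3 t) (Set.Ioo a b) := by
      intro t ht
      have := hzero t ht
      simp only
      linarith
    have h2 := h1.closure hP3'c (by exact hP2c.add (hP4c.mul hP3c))
    rw [closure_Ioo hab.ne] at h2
    exact fun t ht => h2 ht
  intro t ht
  have := main t ht
  rw [hs2, hs4, hs3]
  calc deriv (fun s => deriv (fun v => L s (x s) v (z s)) (deriv x s)) t
      = deriv P3 t := by
        apply Filter.EventuallyEq.deriv_eq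
        filter_upwards with s using hs3 s
    _ = P2 t + P4 t * P3 t := this
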